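/- Let R₀ be the free 𝒪_k-submodule of k[T,T⁻¹,Z] spanned by (ϖT)ᵃ(ϖZ)ᵇ with b ≥ 0, a ≥ -b², let R = kR₀, and let A₀ = R₀[T]. Then Z ∈ A₀ and for every n ≥ 1, (ϖ⁻ⁿZ)^{n+1} ∈ A₀; hence ϖ⁻ⁿZ is power-bounded in the Tate ring A = R with ring of definition A₀, so A° contains the line kZ and A is not uniform. -/

import Mathlib

/-- The valuation ring `𝒪_k = {c : k | ‖c‖ ≤ 1}` of a non-archimedean normed field. -/
def valuationSubring (k : Type*) [NormedField k] [IsUltrametricDist k] : Subring k where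
  carrier := {c | ‖c‖ ≤ 1}
  one_mem' := by simp
  zero_mem' := by simp
  neg_mem' := by simp
  mul_mem' := by
    intro a b ha hb
    simp only [Set.mem_setOf_eq] at *
    calc ‖a * b‖ = ‖a‖ * ‖b‖ := norm_mul a b
      _ ≤ 1 * 1 := mul_le_mul ha hb (norm_nonneg b) zero_le_one
      _ = 1 := one_mul 1
  add_mem' := by
    intro a b ha hb
    simp only [Set.mem_setOf_eq] at *
    exact le_trans (IsUltrametricDist.norm_add_le_max a b) (max_le ha hb)

open Finsupp AddMonoidAlgebra

private lemma aux_ultra_sum {M ι : Type*} [SeminormedAddCommGroup M] [IsUltrametricDist M]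
    {t : Finset ι} {f : ι → M} {B : ℝ} (hB : 0 ≤ B) (h : ∀ i ∈ t, ‖f i‖ ≤ B) :
    ‖∑ i ∈ t, f i‖ ≤ B := by
  rcases t.eq_empty_or_nonempty with rfl | ht
  · simpa using hB
  · obtain ⟨i, hi, hle⟩ := IsUltrametricDist.exists_norm_finset_sum_le_of_nonempty ht f
    exact hle.trans (h i hi)

private lemma aux_coeff_bound
    (k : Type*) [NontriviallyNormedField k] [IsUltrametricDist k]
    (ϖ : k) (hϖ0 : 0 < ‖ϖ‖) (hϖ1 : ‖ϖ‖ < 1)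
    (R₀ : Submodule (valuationSubring k) (AddMonoidAlgebra k (ℤ × ℕ)))
    (hR₀ : R₀ = Submodule.span (valuationSubring k)
      {x : AddMonoidAlgebra k (ℤ × ℕ) | ∃ (a : ℤ) (b : ℕ),
        -(b : ℤ) ^ 2 ≤ a ∧
        x = ϖ ^ (a + b) • AddMonoidAlgebra.single (a, b) (1 : k)})
    (A₀ : Subring (AddMonoidAlgebra k (ℤ × ℕ)))
    (hA₀ : A₀ = Subring.closure
      ((R₀ : Set (AddMonoidAlgebra k (ℤ × ℕ))) ∪
        {AddMonoidAlgebra.single ((1 : ℤ), (0 : ℕ)) (1 : k)})) :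
    ∀ x ∈ A₀, ∀ p : ℤ × ℕ, ‖x.coeff p‖ ≤ ‖ϖ‖ ^ ((p.2 : ℤ) - (p.2 : ℤ) ^ 2) := by
  have hϖ : ϖ ≠ 0 := norm_pos_iff.mp hϖ0
  set r : ℝ := ‖ϖ‖ with hr
  have hrpos : ∀ m : ℤ, (0:ℝ) < r ^ m := fun m => zpow_pos hϖ0 m
  have hrle1 : r ≤ 1 := hϖ1.le
  have hmono : ∀ {m n : ℤ}, m ≤ n → r ^ n ≤ r ^ m :=
    fun h => zpow_le_zpow_right_of_le_one₀ hϖ0 hrle1 h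
  set w : ℤ × ℕ → ℤ := fun p => (p.2 : ℤ) - (p.2 : ℤ) ^ 2 with hw
  -- the subring of elements with all coefficients bounded
  set S : Subring (AddMonoidAlgebra k (ℤ × ℕ)) :=
  { carrier := {x | ∀ p : ℤ × ℕ, ‖x.coeff p‖ ≤ r ^ (w p)}
    zero_mem' := by intro p; simp only [AddMonoidAlgebra.coeff_zero, Finsupp.coe_zero, Pi.zero_apply, norm_zero]
                    exact (hrpos _).le
    one_mem' := by
      intro p
      rw [AddMonoidAlgebra.one_def, AddMonoidAlgebra.coeff_single, Finsupp.single_apply]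
      split
      · next h => subst h; simp [w]
      · simpa using (hrpos _).le
    neg_mem' := by
      intro x hx p
      show ‖(-x).coeff p‖ ≤ _
      rw [AddMonoidAlgebra.coeff_neg, Finsupp.neg_apply, norm_neg]
      exact hx p
    add_mem' := by
      intro x y hx hy p
      exact le_trans (IsUltrametricDist.norm_add_le_max _ _) (max_le (hx p) (hy p))
    mul_mem' := by
      intro x y hx hy p
      rw [AddMonoidAlgebra.mul_apply]
      refine aux_ultra_sum (hrpos _).le ?_
      intro a₁ _
      refine aux_ultra_sum (hrpos _).le ?_
      intro a₂ _
      dsimp only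
      split
      · next heq =>
        have hb : a₁.2 + a₂.2 = p.2 := by rw [← heq, Prod.snd_add]
        have hsub : w p ≤ w a₁ + w a₂ := by
          simp only [w, ← hb]
          push_cast
          nlinarith [a₁.2.cast_nonneg (α := ℤ), a₂.2.cast_nonneg (α := ℤ)]
        calc ‖x.coeff a₁ * y.coeff a₂‖ = ‖x.coeff a₁‖ * ‖y.coeff a₂‖ := norm_mul _ _
          _ ≤ r ^ (w a₁) * r ^ (w a₂) :=
              mul_le_mul (hx a₁) (hy a₂) (norm_nonneg _) (hrpos _).le
          _ = r ^ (w a₁ + w a₂) := (zpow_add₀ (by positivity) _ _).symm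
          _ ≤ r ^ (w p) := hmono hsub
      · simpa using (hrpos _).le } with hS
  have hsingle : ∀ (a : ℤ) (b : ℕ), -(b:ℤ)^2 ≤ a →
      (ϖ ^ (a + b) • AddMonoidAlgebra.single ((a,b) : ℤ × ℕ) (1:k)) ∈ S := by
    intro a b hab p
    show ‖ϖ ^ (a + (b:ℤ)) * (Finsupp.single ((a,b) : ℤ × ℕ) (1:k)) p‖ ≤ _
    rw [Finsupp.single_apply]
    split
    · next h =>
      subst h
      rw [mul_one, norm_zpow]
      exact hmono (by simp only [w]; omega)
    · simpa using (hrpos _).le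
  have hR₀S : (R₀ : Set (AddMonoidAlgebra k (ℤ × ℕ))) ⊆ S := by
    intro x hx
    rw [hR₀] at hx
    refine Submodule.span_induction ?_ (S.zero_mem) (fun a b _ _ => S.add_mem) ?_ hx
    · rintro x ⟨a, b, hab, rfl⟩
      exact hsingle a b hab
    · rintro ⟨c, hc⟩ x _ hxS p
      show ‖c • x.coeff p‖ ≤ _
      rw [smul_eq_mul, norm_mul]
      calc ‖c‖ * ‖x.coeff p‖ ≤ 1 * (r ^ (w p)) :=
            mul_le_mul hc (hxS p) (norm_nonneg _) zero_le_one
        _ = r ^ (w p) := one_mul _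
  have hAS : (A₀ : Set (AddMonoidAlgebra k (ℤ × ℕ))) ⊆ S := by
    rw [hA₀]
    refine Subring.closure_le.mpr ?_
    rintro x (hx | hx)
    · exact hR₀S hx
    · rcases hx with rfl
      intro p
      show ‖(Finsupp.single ((1,0) : ℤ × ℕ) (1:k)) p‖ ≤ _
      rw [Finsupp.single_apply]
      split
      · next h => subst h; simp [w]
      · simpa using (hrpos _).le
  exact fun x hx p => hAS hx p

/-- With `R₀ ⊆ k[T,T⁻¹,Z]` spanned over `𝒪_k` by `(ϖT)ᵃ(ϖZ)ᵇ`
(`b ≥ 0`, `a ≥ -b²`), `R = kR₀` and `A₀ = R₀[T]`: we have `Z ∈ A₀`, and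
`(ϖ⁻ⁿZ)^{n+1} ∈ A₀` for every `n ≥ 1`; hence every element of the line `kZ` is
power-bounded in `A = R` with ring of definition `A₀`, and `A` is not uniform. -/
theorem rational_subset_not_uniform
    (k : Type*) [NontriviallyNormedField k] [IsUltrametricDist k] [CompleteSpace k]
    (ϖ : k) (hϖ0 : 0 < ‖ϖ‖) (hϖ1 : ‖ϖ‖ < 1)
    (R₀ : Submodule (valuationSubring k) (AddMonoidAlgebra k (ℤ × ℕ)))
    (hR₀ : R₀ = Submodule.span (valuationSubring k)
      {x : AddMonoidAlgebra k (ℤ × ℕ) | ∃ (a : ℤ) (b : ℕ),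
        -(b : ℤ) ^ 2 ≤ a ∧
        x = ϖ ^ (a + b) • AddMonoidAlgebra.single (a, b) (1 : k)})
    (Z : AddMonoidAlgebra k (ℤ × ℕ))
    (hZ : Z = AddMonoidAlgebra.single ((0 : ℤ), (1 : ℕ)) (1 : k))
    (A₀ : Subring (AddMonoidAlgebra k (ℤ × ℕ)))
    (hA₀ : A₀ = Subring.closure
      ((R₀ : Set (AddMonoidAlgebra k (ℤ × ℕ))) ∪
        {AddMonoidAlgebra.single ((1 : ℤ), (0 : ℕ)) (1 : k)})) :
    Z ∈ A₀ ∧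
    (∀ n : ℕ, 1 ≤ n → ((ϖ⁻¹) ^ n • Z) ^ (n + 1) ∈ A₀) ∧
    (∀ c : k, ∃ N : ℕ, ∀ m : ℕ, ϖ ^ N • (c • Z) ^ m ∈ A₀) ∧
    ¬ ∃ N : ℕ, ∀ x ∈ Submodule.span k (R₀ : Set (AddMonoidAlgebra k (ℤ × ℕ))),
        (∃ N' : ℕ, ∀ m : ℕ, ϖ ^ N' • x ^ m ∈ A₀) → ϖ ^ N • x ∈ A₀ := by
  have hϖ : ϖ ≠ 0 := norm_pos_iff.mp hϖ0
  set r : ℝ := ‖ϖ‖ with hrdef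
  have hr0 : (0:ℝ) ≤ r := hϖ0.le
  have hrle1 : r ≤ 1 := hϖ1.le
  -- basic membership facts
  have hT : AddMonoidAlgebra.single ((1:ℤ),(0:ℕ)) (1:k) ∈ A₀ := by
    rw [hA₀]; exact Subring.subset_closure (Or.inr rfl)
  have hRsub : ∀ x ∈ R₀, x ∈ A₀ := by
    intro x hx; rw [hA₀]; exact Subring.subset_closure (Or.inl hx)
  have hgen : ∀ (a : ℤ) (b : ℕ), -(b:ℤ)^2 ≤ a →
      ϖ ^ (a + b) • AddMonoidAlgebra.single ((a,b) : ℤ × ℕ) (1:k) ∈ R₀ := by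
    intro a b hab; rw [hR₀]; exact Submodule.subset_span ⟨a, b, hab, rfl⟩
  have hsmul : ∀ (u : k), ‖u‖ ≤ 1 → ∀ x ∈ R₀, u • x ∈ R₀ := by
    intro u hu x hx
    exact R₀.smul_mem ⟨u, hu⟩ hx
  have hTpow : ∀ M : ℕ, (AddMonoidAlgebra.single ((1:ℤ),(0:ℕ)) (1:k)) ^ M
      = AddMonoidAlgebra.single (((M:ℤ),(0:ℕ)) : ℤ × ℕ) (1:k) := by
    intro M; rw [AddMonoidAlgebra.single_pow]; congr 1 <;> simp
  have hZpow : ∀ m : ℕ, Z ^ m = AddMonoidAlgebra.single (((0:ℤ), m) : ℤ × ℕ) (1:k) := by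
    intro m; rw [hZ, AddMonoidAlgebra.single_pow]; congr 1 <;> simp
  -- key membership lemma
  have hkey : ∀ (d : k) (m : ℕ), ‖d * ϖ ^ ((m:ℤ)^2 - (m:ℤ))‖ ≤ 1 →
      d • AddMonoidAlgebra.single (((0:ℤ), m) : ℤ × ℕ) (1:k) ∈ A₀ := by
    intro d m hd
    set u : k := d * ϖ ^ ((m:ℤ)^2 - (m:ℤ)) with hu
    have hg : ϖ ^ ((-(m:ℤ)^2) + (m:ℕ)) •
        AddMonoidAlgebra.single (((-(m:ℤ)^2), m) : ℤ × ℕ) (1:k) ∈ R₀ :=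
      hgen (-(m:ℤ)^2) m le_rfl
    have hug := hsmul u hd _ hg
    have hmem : (AddMonoidAlgebra.single ((1:ℤ),(0:ℕ)) (1:k)) ^ (m*m) *
        (u • (ϖ ^ ((-(m:ℤ)^2) + (m:ℕ)) •
          AddMonoidAlgebra.single (((-(m:ℤ)^2), m) : ℤ × ℕ) (1:k))) ∈ A₀ :=
      A₀.mul_mem (A₀.pow_mem hT _) (hRsub _ hug)
    have heq : (AddMonoidAlgebra.single ((1:ℤ),(0:ℕ)) (1:k)) ^ (m*m) *
        (u • (ϖ ^ ((-(m:ℤ)^2) + (m:ℕ)) •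
          AddMonoidAlgebra.single (((-(m:ℤ)^2), m) : ℤ × ℕ) (1:k)))
        = d • AddMonoidAlgebra.single (((0:ℤ), m) : ℤ × ℕ) (1:k) := by
      rw [hTpow, smul_smul, mul_smul_comm, AddMonoidAlgebra.single_mul_single, mul_one]
      have h1 : (((m*m : ℕ) : ℤ), (0:ℕ)) + ((-(m:ℤ)^2), m) = (((0:ℤ), m) : ℤ × ℕ) := by
        rw [Prod.mk_add_mk]
        simp only [Prod.mk.injEq]
        refine ⟨?_, ?_⟩ <;> push_cast <;> ring
      rw [h1]
      congr 1
      rw [hu, mul_assoc, ← zpow_add₀ hϖ]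
      have : ((m:ℤ)^2 - (m:ℤ)) + ((-(m:ℤ)^2) + (m:ℕ)) = 0 := by push_cast; ring
      rw [this, zpow_zero, mul_one]
    rw [heq] at hmem
    exact hmem
  -- Part 1 : Z ∈ A₀
  have part1 : Z ∈ A₀ := by
    have : (1:k) • Z ∈ A₀ := by
      rw [hZ]
      refine hkey 1 1 ?_
      norm_num
    rwa [one_smul] at this
  -- auxiliary: (ϖ⁻¹)^M = ϖ^(-(M:ℤ))
  have hinvpow : ∀ M : ℕ, (ϖ⁻¹)^M = ϖ ^ (-(M:ℤ)) := by
    intro M; rw [zpow_neg, zpow_natCast, inv_pow]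
  -- Part 2
  have part2 : ∀ n : ℕ, 1 ≤ n → ((ϖ⁻¹) ^ n • Z) ^ (n + 1) ∈ A₀ := by
    intro n _
    have heq : ((ϖ⁻¹) ^ n • Z) ^ (n + 1)
        = ((ϖ⁻¹) ^ (n*(n+1))) • AddMonoidAlgebra.single (((0:ℤ), n+1) : ℤ × ℕ) (1:k) := by
      rw [smul_pow, ← pow_mul, hZpow]
    rw [heq]
    refine hkey _ (n+1) ?_
    rw [hinvpow, ← zpow_add₀ hϖ]
    have : (-((n*(n+1) : ℕ) : ℤ)) + (((n+1:ℕ):ℤ)^2 - ((n+1:ℕ):ℤ)) = 0 := by push_cast; ring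
    rw [this, zpow_zero, norm_one]
  -- Part 3
  have part3 : ∀ c : k, ∃ N : ℕ, ∀ m : ℕ, ϖ ^ N • (c • Z) ^ m ∈ A₀ := by
    intro c
    set s : ℝ := ‖c‖ with hsdef
    have hs : (0:ℝ) ≤ s := norm_nonneg c
    obtain ⟨m₀, hm₀'⟩ := exists_pow_lt_of_lt_one (x := 1/(s+1)) (by positivity) hϖ1
    have hm₀ : s * r ^ m₀ ≤ 1 := by
      have h1 : s * r ^ m₀ ≤ s * (1/(s+1)) :=
        mul_le_mul_of_nonneg_left hm₀'.le hs
      have h2 : s * (1/(s+1)) ≤ 1 := by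
        rw [mul_one_div]
        rw [div_le_one (by positivity)]
        linarith
      linarith
    obtain ⟨N, hN'⟩ := exists_pow_lt_of_lt_one
      (x := ((max 1 s)^m₀)⁻¹) (by positivity) hϖ1
    have hN : r ^ N * (max 1 s) ^ m₀ ≤ 1 := by
      have := mul_le_mul_of_nonneg_right hN'.le (by positivity : (0:ℝ) ≤ (max 1 s)^m₀)
      rwa [inv_mul_cancel₀ (by positivity)] at this
    refine ⟨N, fun m => ?_⟩
    have heq : ϖ ^ N • (c • Z) ^ m
        = (ϖ^N * c^m) • AddMonoidAlgebra.single (((0:ℤ), m) : ℤ × ℕ) (1:k) := by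
      rw [smul_pow, hZpow, smul_smul]
    rw [heq]
    refine hkey _ m ?_
    -- norm estimate
    have hcast : ((m:ℤ)^2 - (m:ℤ)) = ((m*m - m : ℕ) : ℤ) := by
      have h1 : m ≤ m * m := by nlinarith
      push_cast [h1]
      ring
    rw [hcast, zpow_natCast, norm_mul, norm_mul, norm_pow, norm_pow, norm_pow,
      ← hrdef, ← hsdef]
    by_cases hm : m ≤ m₀
    · have h1 : s^m ≤ (max 1 s)^m₀ :=
        le_trans (pow_le_pow_left₀ hs (le_max_right 1 s) m)
          (pow_le_pow_right₀ (le_max_left 1 s) hm)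
      have h2 : r^(m*m-m) ≤ 1 := pow_le_one₀ hr0 hrle1
      have h3 : r^N * s^m ≤ 1 :=
        le_trans (mul_le_mul_of_nonneg_left h1 (pow_nonneg hr0 N)) hN
      calc r^N * s^m * r^(m*m-m) ≤ 1 * 1 :=
            mul_le_mul h3 h2 (pow_nonneg hr0 _) zero_le_one
        _ = 1 := one_mul 1
    · push_neg at hm
      have h3 : m₀*m ≤ m*m - m := by
        have h4 : m₀*m + m ≤ m*m := by nlinarith
        omega
      have hA : r^(m*m-m) ≤ (r^m₀)^m := by
        rw [← pow_mul]
        exact pow_le_pow_of_le_one hr0 hrle1 h3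
      have hB : s^m * (r^m₀)^m ≤ 1 := by
        rw [← mul_pow]
        exact pow_le_one₀ (by positivity) hm₀
      have hC : r^N ≤ 1 := pow_le_one₀ hr0 hrle1
      have h5 : s^m * r^(m*m-m) ≤ s^m * (r^m₀)^m :=
        mul_le_mul_of_nonneg_left hA (pow_nonneg hs m)
      calc r^N * s^m * r^(m*m-m) = r^N * (s^m * r^(m*m-m)) := mul_assoc _ _ _
        _ ≤ 1 * 1 := mul_le_mul hC (h5.trans hB) (by positivity) zero_le_one
        _ = 1 := one_mul 1
  refine ⟨part1, part2, part3, ?_⟩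
  -- Part 4 : not uniform
  rintro ⟨N, hN⟩
  have key := aux_coeff_bound k ϖ hϖ0 hϖ1 R₀ hR₀ A₀ hA₀
  set c : k := (ϖ⁻¹)^(N+1) with hc
  have hZspan : Z ∈ Submodule.span k (R₀ : Set (AddMonoidAlgebra k (ℤ × ℕ))) := by
    have hg01 : ϖ ^ ((0:ℤ) + ((1:ℕ):ℤ)) •
        AddMonoidAlgebra.single (((0:ℤ),(1:ℕ)) : ℤ × ℕ) (1:k) ∈ R₀ := hgen 0 1 (by norm_num)
    have h1 : ϖ • Z ∈ Submodule.span k (R₀ : Set (AddMonoidAlgebra k (ℤ × ℕ))) := by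
      refine Submodule.subset_span ?_
      have : ϖ ^ ((0:ℤ) + ((1:ℕ):ℤ)) = ϖ := by norm_num
      rw [hZ]
      rw [this] at hg01
      exact hg01
    have h2 := Submodule.smul_mem _ ϖ⁻¹ h1
    rwa [smul_smul, inv_mul_cancel₀ hϖ, one_smul] at h2
  have hx_mem : c • Z ∈ Submodule.span k (R₀ : Set (AddMonoidAlgebra k (ℤ × ℕ))) :=
    Submodule.smul_mem _ c hZspan
  have h := hN (c • Z) hx_mem (part3 c)
  have heq : ϖ ^ N • (c • Z) = ϖ⁻¹ • Z := by
    rw [smul_smul, hc, pow_succ, ← mul_assoc, ← mul_pow, mul_inv_cancel₀ hϖ, one_pow, one_mul]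
  rw [heq] at h
  have hb := key _ h ((0:ℤ),(1:ℕ))
  have hcoeff : (ϖ⁻¹ • Z).coeff (((0:ℤ),(1:ℕ)) : ℤ × ℕ) = ϖ⁻¹ := by
    rw [hZ]
    show ϖ⁻¹ * (Finsupp.single (((0:ℤ),(1:ℕ)) : ℤ × ℕ) (1:k)) _ = _
    rw [Finsupp.single_apply, if_pos rfl, mul_one]
  rw [hcoeff] at hb
  norm_num at hb
  have : (1:ℝ) < ‖ϖ‖⁻¹ := (one_lt_inv₀ hϖ0).mpr hϖ1
  linarith
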